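/- Work in Λ(ℂ^7). With ω_1 := e_1∧e_2 + e_3∧e_4, ω_2 := e_1∧e_3 − e_2∧e_4, ω_3 := e_1∧e_4 + e_2∧e_3, define Γ := e_5∧ω_1 + e_6∧ω_2 + e_7∧ω_3 + e_5∧e_6∧e_7 and P := ω_1∧ω_1 + ω_2∧ω_2 + ω_3∧ω_3 + ω_1∧e_6∧e_7 − e_5∧ω_2∧e_7 + e_5∧e_6∧ω_3. Then Γ∧P = 12·e_1∧e_2∧e_3∧e_4∧e_5∧e_6∧e_7; in particular Γ∧P ≠ 0. -/

import Mathlib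

/-- The 1-based `i`-th standard basis vector of `ℂ^N`, viewed inside the
exterior algebra `Λ(ℂ^N)` via the canonical inclusion `ι`. -/
noncomputable def e (N : ℕ) (i : ℕ) : ExteriorAlgebra ℂ (Fin N → ℂ) :=
  ExteriorAlgebra.ι ℂ (fun k : Fin N => if (k : ℕ) + 1 = i then (1 : ℂ) else 0)

noncomputable def ω₁ : ExteriorAlgebra ℂ (Fin 7 → ℂ) := e 7 1 * e 7 2 + e 7 3 * e 7 4
noncomputable def ω₂ : ExteriorAlgebra ℂ (Fin 7 → ℂ) := e 7 1 * e 7 3 - e 7 2 * e 7 4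
noncomputable def ω₃ : ExteriorAlgebra ℂ (Fin 7 → ℂ) := e 7 1 * e 7 4 + e 7 2 * e 7 3

/-- `Γ := e_5∧ω_1 + e_6∧ω_2 + e_7∧ω_3 + e_5∧e_6∧e_7` in `Λ(ℂ^7)`. -/
noncomputable def Γform : ExteriorAlgebra ℂ (Fin 7 → ℂ) :=
  e 7 5 * ω₁ + e 7 6 * ω₂ + e 7 7 * ω₃ + e 7 5 * e 7 6 * e 7 7

/-- `P := ω_1∧ω_1 + ω_2∧ω_2 + ω_3∧ω_3 + ω_1∧e_6∧e_7 − e_5∧ω_2∧e_7 + e_5∧e_6∧ω_3`. -/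
noncomputable def Pform : ExteriorAlgebra ℂ (Fin 7 → ℂ) :=
  ω₁ * ω₁ + ω₂ * ω₂ + ω₃ * ω₃ + ω₁ * e 7 6 * e 7 7 - e 7 5 * ω₂ * e 7 7 + e 7 5 * e 7 6 * ω₃

lemma eswap (i j : ℕ) : e 7 j * e 7 i = -(e 7 i * e 7 j) := by
  have := ExteriorAlgebra.ι_add_mul_swap (R := ℂ)
    (fun k : Fin 7 => if (k : ℕ) + 1 = i then (1 : ℂ) else 0)
    (fun k : Fin 7 => if (k : ℕ) + 1 = j then (1 : ℂ) else 0)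
  unfold e
  exact eq_neg_of_add_eq_zero_right this

lemma eswap' (i j : ℕ) (x : ExteriorAlgebra ℂ (Fin 7 → ℂ)) :
    e 7 j * (e 7 i * x) = -(e 7 i * (e 7 j * x)) := by
  rw [← mul_assoc, eswap, neg_mul, mul_assoc]

lemma esq (i : ℕ) : e 7 i * e 7 i = 0 := ExteriorAlgebra.ι_sq_zero _

lemma esq' (i : ℕ) (x : ExteriorAlgebra ℂ (Fin 7 → ℂ)) : e 7 i * (e 7 i * x) = 0 := by
  rw [← mul_assoc, esq, zero_mul]

noncomputable def detF : ∀ i : ℕ, (Fin 7 → ℂ) [⋀^Fin i]→ₗ[ℂ] ℂ :=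
  Function.update (fun _ => 0) 7 (Matrix.detRowAlternating)

noncomputable def vbasis : Fin 7 → (Fin 7 → ℂ) :=
  fun i k => if (k : ℕ) + 1 = (i : ℕ) + 1 then (1 : ℂ) else 0

lemma prod_eq : e 7 1 * e 7 2 * e 7 3 * e 7 4 * e 7 5 * e 7 6 * e 7 7
    = ExteriorAlgebra.ιMulti ℂ 7 vbasis := by
  rw [ExteriorAlgebra.ιMulti_apply]
  simp only [List.ofFn_succ, List.prod_cons, List.ofFn_zero, List.prod_nil, mul_one, mul_assoc]
  rfl

lemma top_ne_zero : e 7 1 * e 7 2 * e 7 3 * e 7 4 * e 7 5 * e 7 6 * e 7 7 ≠ 0 := by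
  intro h
  have h2 := congrArg (ExteriorAlgebra.liftAlternating detF) h
  rw [prod_eq, ExteriorAlgebra.liftAlternating_apply_ιMulti, map_zero] at h2
  have hd : Matrix.detRowAlternating vbasis = Matrix.det (Matrix.of vbasis) := by
    unfold Matrix.det
    exact congrArg _ rfl
  have hv : Matrix.of vbasis = (1 : Matrix (Fin 7) (Fin 7) ℂ) := by
    ext i k
    simp [vbasis, Matrix.one_apply, Fin.ext_iff, eq_comm]
  have hf : detF 7 vbasis = 1 := by
    rw [detF, Function.update_self, hd, hv, Matrix.det_one]
  rw [hf] at h2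
  exact one_ne_zero h2

set_option maxHeartbeats 2000000 in
lemma main_eq :
    Γform * Pform =
      (12 : ℂ) • (e 7 1 * e 7 2 * e 7 3 * e 7 4 * e 7 5 * e 7 6 * e 7 7) := by
  rw [Γform, Pform, ω₁, ω₂, ω₃]
  simp only [mul_add, add_mul, mul_sub, sub_mul, mul_assoc, smul_add, smul_mul_assoc]
  simp [eswap 1 2, eswap 1 3, eswap 1 4, eswap 1 5, eswap 1 6, eswap 1 7,
    eswap 2 3, eswap 2 4, eswap 2 5, eswap 2 6, eswap 2 7,
    eswap 3 4, eswap 3 5, eswap 3 6, eswap 3 7,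
    eswap 4 5, eswap 4 6, eswap 4 7, eswap 5 6, eswap 5 7, eswap 6 7,
    eswap' 1 2, eswap' 1 3, eswap' 1 4, eswap' 1 5, eswap' 1 6, eswap' 1 7,
    eswap' 2 3, eswap' 2 4, eswap' 2 5, eswap' 2 6, eswap' 2 7,
    eswap' 3 4, eswap' 3 5, eswap' 3 6, eswap' 3 7,
    eswap' 4 5, eswap' 4 6, eswap' 4 7, eswap' 5 6, eswap' 5 7, eswap' 6 7,
    esq 1, esq 2, esq 3, esq 4, esq 5, esq 6, esq 7,
    esq' 1, esq' 2, esq' 3, esq' 4, esq' 5, esq' 6, esq' 7, smul_smul]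
  module

/-- `Γ∧P = 12·e_1∧e_2∧e_3∧e_4∧e_5∧e_6∧e_7`; in particular `Γ∧P ≠ 0`. -/
theorem stmt_5 :
    Γform * Pform =
      (12 : ℂ) • (e 7 1 * e 7 2 * e 7 3 * e 7 4 * e 7 5 * e 7 6 * e 7 7) ∧
    Γform * Pform ≠ 0 := by
  refine ⟨main_eq, ?_⟩
  rw [main_eq]
  exact smul_ne_zero (by norm_num) top_ne_zero
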